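/- Let Q1, Q2 be finite-dimensional Hilbert spaces with Q1 ≅ Q2 via a unitary W : Q2 → Q1, and let V1, V2 be finite-dimensional Hilbert spaces. Unit vectors ψ1 ∈ Q1 ⊗ V1 and ψ2 ∈ Q2 ⊗ V2 satisfy: ψ1 ⊗ ψ2 lies in the fixed-point subspace of the swap-with-transfer operator (W* ⊗ W) ∘ swap acting on the Q1, Q2 factors, if and only if there exist unit vectors ψ1Q ∈ Q1, ψ1Y ∈ V1, ψ2Q ∈ Q2, ψ2Y ∈ V2 with ψ1 = ψ1Q ⊗ ψ1Y, ψ2 = ψ2Q ⊗ ψ2Y, and ψ1Q = W ψ2Q. -/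

import Mathlib

open scoped Kronecker

noncomputable section

def tensVec {ι κ : Type*} [Fintype ι] [Fintype κ]
    (x : EuclideanSpace ℂ ι) (y : EuclideanSpace ℂ κ) : EuclideanSpace ℂ (ι × κ) :=
  WithLp.toLp 2 (fun p : ι × κ => x p.1 * y p.2)

def reindexCLM {ι κ : Type*} [Fintype ι] [Fintype κ] (e : ι ≃ κ) :
    EuclideanSpace ℂ ι →L[ℂ] EuclideanSpace ℂ κ :=
  LinearMap.toContinuousLinearMap
    { toFun := fun f => (WithLp.toLp 2 (fun j => f (e.symm j)) : EuclideanSpace ℂ κ)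
      map_add' := fun _ _ => rfl
      map_smul' := fun _ _ => rfl }

def opTensCLM {ι κ μ ν : Type*} [Fintype ι] [Fintype κ] [Fintype μ] [Fintype ν]
    [DecidableEq κ] [DecidableEq ν]
    (A : EuclideanSpace ℂ κ →L[ℂ] EuclideanSpace ℂ ι)
    (B : EuclideanSpace ℂ ν →L[ℂ] EuclideanSpace ℂ μ) :
    EuclideanSpace ℂ (κ × ν) →L[ℂ] EuclideanSpace ℂ (ι × μ) :=
  LinearMap.toContinuousLinearMap <| Matrix.toEuclideanLin <|
    (Matrix.toEuclideanLin.symm (A : EuclideanSpace ℂ κ →ₗ[ℂ] EuclideanSpace ℂ ι)) ⊗ₖ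
      (Matrix.toEuclideanLin.symm (B : EuclideanSpace ℂ ν →ₗ[ℂ] EuclideanSpace ℂ μ))

def eqOpCLM {q₁ q₂ z : Type*} [Fintype q₁] [Fintype q₂] [Fintype z]
    [DecidableEq q₁] [DecidableEq q₂]
    (V1 : EuclideanSpace ℂ q₁ →L[ℂ] EuclideanSpace ℂ z)
    (V2 : EuclideanSpace ℂ q₂ →L[ℂ] EuclideanSpace ℂ z) :
    EuclideanSpace ℂ (q₁ × q₂) →L[ℂ] EuclideanSpace ℂ (q₁ × q₂) :=
  (reindexCLM (Equiv.prodComm q₂ q₁)).comp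
    (opTensCLM ((ContinuousLinearMap.adjoint V2).comp V1)
      ((ContinuousLinearMap.adjoint V1).comp V2))

def eqSub {q₁ q₂ z : Type*} [Fintype q₁] [Fintype q₂] [Fintype z]
    [DecidableEq q₁] [DecidableEq q₂]
    (V1 : EuclideanSpace ℂ q₁ →L[ℂ] EuclideanSpace ℂ z)
    (V2 : EuclideanSpace ℂ q₂ →L[ℂ] EuclideanSpace ℂ z) :
    Submodule ℂ (EuclideanSpace ℂ (q₁ × q₂)) :=
  LinearMap.ker
    ((eqOpCLM V1 V2 : EuclideanSpace ℂ (q₁ × q₂) →ₗ[ℂ] EuclideanSpace ℂ (q₁ × q₂)) - LinearMap.id)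

def eqFull {q₁ y₁ q₂ y₂ z : Type*}
    [Fintype q₁] [Fintype y₁] [Fintype q₂] [Fintype y₂] [Fintype z]
    [DecidableEq q₁] [DecidableEq q₂] [DecidableEq y₁] [DecidableEq y₂]
    (U1 : EuclideanSpace ℂ q₁ →L[ℂ] EuclideanSpace ℂ z)
    (U2 : EuclideanSpace ℂ q₂ →L[ℂ] EuclideanSpace ℂ z) :
    EuclideanSpace ℂ ((q₁ × y₁) × (q₂ × y₂)) →L[ℂ] EuclideanSpace ℂ ((q₁ × y₁) × (q₂ × y₂)) :=
  (reindexCLM (Equiv.prodProdProdComm q₁ q₂ y₁ y₂)).comp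
    ((opTensCLM (eqOpCLM U1 U2) (ContinuousLinearMap.id ℂ (EuclideanSpace ℂ (y₁ × y₂)))).comp
      (reindexCLM (Equiv.prodProdProdComm q₁ y₁ q₂ y₂)))

def tensRLin {ι κ : Type*} [Fintype ι] [Fintype κ] (ψ : EuclideanSpace ℂ κ) :
    EuclideanSpace ℂ ι →ₗ[ℂ] EuclideanSpace ℂ (ι × κ) where
  toFun φ := tensVec φ ψ
  map_add' x y := by ext p; simp [tensVec, PiLp.add_apply, add_mul]
  map_smul' c x := by ext p; simp [tensVec, PiLp.smul_apply, smul_eq_mul, mul_assoc]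

def tensSpan {ι κ : Type*} [Fintype ι] [Fintype κ]
    (S : Submodule ℂ (EuclideanSpace ℂ ι)) (T : Submodule ℂ (EuclideanSpace ℂ κ)) :
    Submodule ℂ (EuclideanSpace ℂ (ι × κ)) :=
  Submodule.span ℂ {z | ∃ x ∈ S, ∃ y ∈ T, z = tensVec x y}

def spanDiv {ι κ : Type*} [Fintype ι] [Fintype κ]
    (B : Submodule ℂ (EuclideanSpace ℂ (ι × κ))) (ψ : EuclideanSpace ℂ κ) :
    Submodule ℂ (EuclideanSpace ℂ ι) :=
  Submodule.comap (tensRLin ψ) B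

def rankOneCLM {H : Type*} [NormedAddCommGroup H] [InnerProductSpace ℂ H] (ψ : H) :
    H →L[ℂ] H :=
  (innerSL ℂ ψ).smulRight ψ

def ptraceRight {ι κ : Type*} [Fintype ι] [Fintype κ] [DecidableEq ι] [DecidableEq κ]
    (ρ : EuclideanSpace ℂ (ι × κ) →L[ℂ] EuclideanSpace ℂ (ι × κ)) :
    EuclideanSpace ℂ ι →L[ℂ] EuclideanSpace ℂ ι :=
  LinearMap.toContinuousLinearMap <| Matrix.toEuclideanLin <|
    Matrix.of fun i j => ∑ k : κ,
      Matrix.toEuclideanLin.symm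
        (ρ : EuclideanSpace ℂ (ι × κ) →ₗ[ℂ] EuclideanSpace ℂ (ι × κ)) (i, k) (j, k)

def ptraceLeft {ι κ : Type*} [Fintype ι] [Fintype κ] [DecidableEq ι] [DecidableEq κ]
    (ρ : EuclideanSpace ℂ (ι × κ) →L[ℂ] EuclideanSpace ℂ (ι × κ)) :
    EuclideanSpace ℂ κ →L[ℂ] EuclideanSpace ℂ κ :=
  LinearMap.toContinuousLinearMap <| Matrix.toEuclideanLin <|
    Matrix.of fun i j => ∑ k : ι,
      Matrix.toEuclideanLin.symm
        (ρ : EuclideanSpace ℂ (ι × κ) →ₗ[ℂ] EuclideanSpace ℂ (ι × κ)) (k, i) (k, j)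

end


section Aux
open scoped Kronecker

variable {ι κ μ ν : Type*} [Fintype ι] [Fintype κ] [Fintype μ] [Fintype ν]

lemma tensVec_apply (x : EuclideanSpace ℂ ι) (y : EuclideanSpace ℂ κ) (p : ι × κ) :
    tensVec x y p = x p.1 * y p.2 := rfl

lemma euclid_decomp [DecidableEq ι] (f : EuclideanSpace ℂ ι) :
    f = ∑ i, f i • EuclideanSpace.single i 1 := by
  ext x
  have : (∑ i, f i • EuclideanSpace.single i 1 : EuclideanSpace ℂ ι) x
      = ∑ i, (f i • EuclideanSpace.single i 1 : EuclideanSpace ℂ ι) x :=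
    by rw [WithLp.ofLp_sum, Finset.sum_apply]
  rw [this]
  simp [EuclideanSpace.single_apply]

lemma clm_apply_eq_sum [DecidableEq ι]
    (T : EuclideanSpace ℂ ι →L[ℂ] EuclideanSpace ℂ κ) (f : EuclideanSpace ℂ ι) (j : κ) :
    T f j = ∑ i, f i * T (EuclideanSpace.single i 1) j := by
  conv_lhs => rw [euclid_decomp f, map_sum]
  have : (∑ i, f i • T (EuclideanSpace.single i 1) : EuclideanSpace ℂ κ) j
      = ∑ i, (f i • T (EuclideanSpace.single i 1) : EuclideanSpace ℂ κ) j :=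
    by rw [WithLp.ofLp_sum, Finset.sum_apply]
  simp only [map_smul, this, PiLp.smul_apply, smul_eq_mul]

lemma symm_ent [DecidableEq κ]
    (A : EuclideanSpace ℂ κ →ₗ[ℂ] EuclideanSpace ℂ ι) (i : ι) (k : κ) :
    Matrix.toEuclideanLin.symm A i k = A (EuclideanSpace.single k 1) i := by
  conv_rhs => rw [← LinearEquiv.apply_symm_apply Matrix.toEuclideanLin A]
  rw [Matrix.toEuclideanLin_apply]
  simp [Matrix.mulVec, dotProduct, EuclideanSpace.single_apply]

lemma opTensCLM_single [DecidableEq κ] [DecidableEq ν]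
    (A : EuclideanSpace ℂ κ →L[ℂ] EuclideanSpace ℂ ι)
    (B : EuclideanSpace ℂ ν →L[ℂ] EuclideanSpace ℂ μ) (p : κ × ν) (r : ι × μ) :
    opTensCLM A B (EuclideanSpace.single p 1) r
      = A (EuclideanSpace.single p.1 1) r.1 * B (EuclideanSpace.single p.2 1) r.2 := by
  obtain ⟨k, n⟩ := p
  obtain ⟨i, m⟩ := r
  rw [show opTensCLM A B (EuclideanSpace.single (k, n) 1)
      = Matrix.toEuclideanLin
        ((Matrix.toEuclideanLin.symm (A : EuclideanSpace ℂ κ →ₗ[ℂ] EuclideanSpace ℂ ι)) ⊗ₖ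
          (Matrix.toEuclideanLin.symm (B : EuclideanSpace ℂ ν →ₗ[ℂ] EuclideanSpace ℂ μ)))
        (EuclideanSpace.single (k, n) 1) from rfl]
  rw [Matrix.toEuclideanLin_apply]
  simp [Matrix.mulVec, dotProduct, EuclideanSpace.single_apply, symm_ent,
    Matrix.kroneckerMap_apply]

lemma reindexCLM_apply (e : ι ≃ κ)
    (f : EuclideanSpace ℂ ι) (j : κ) : reindexCLM e f j = f (e.symm j) := rfl

lemma eval_eq {f g : EuclideanSpace ℂ ι} (h : f = g) (p : ι) : f p = g p :=
  congrArg (fun G => G p) h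

lemma norm_tensVec (x : EuclideanSpace ℂ ι) (y : EuclideanSpace ℂ κ) :
    ‖tensVec x y‖ = ‖x‖ * ‖y‖ := by
  rw [EuclideanSpace.norm_eq, EuclideanSpace.norm_eq, EuclideanSpace.norm_eq,
    ← Real.sqrt_mul (by positivity)]
  congr 1
  rw [Finset.sum_mul_sum, Fintype.sum_prod_type]
  refine Finset.sum_congr rfl fun i _ => Finset.sum_congr rfl fun j _ => ?_
  simp [tensVec_apply, norm_mul, mul_pow]

lemma eqOpCLM_single {q₁ q₂ z : Type*} [Fintype q₁] [Fintype q₂] [Fintype z]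
    [DecidableEq q₁] [DecidableEq q₂]
    (V1 : EuclideanSpace ℂ q₁ →L[ℂ] EuclideanSpace ℂ z)
    (V2 : EuclideanSpace ℂ q₂ →L[ℂ] EuclideanSpace ℂ z) (p : q₁ × q₂) (i : q₁) (j : q₂) :
    eqOpCLM V1 V2 (EuclideanSpace.single p 1) (i, j)
      = ((ContinuousLinearMap.adjoint V2).comp V1) (EuclideanSpace.single p.1 1) j
        * ((ContinuousLinearMap.adjoint V1).comp V2) (EuclideanSpace.single p.2 1) i := by
  rw [eqOpCLM, ContinuousLinearMap.comp_apply, reindexCLM_apply, opTensCLM_single]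
  rfl

lemma eqFull_apply {q₁ y₁ q₂ y₂ z : Type*}
    [Fintype q₁] [Fintype y₁] [Fintype q₂] [Fintype y₂] [Fintype z]
    [DecidableEq q₁] [DecidableEq q₂] [DecidableEq y₁] [DecidableEq y₂]
    (U1 : EuclideanSpace ℂ q₁ →L[ℂ] EuclideanSpace ℂ z)
    (U2 : EuclideanSpace ℂ q₂ →L[ℂ] EuclideanSpace ℂ z)
    (F : EuclideanSpace ℂ ((q₁ × y₁) × (q₂ × y₂))) (i : q₁) (a : y₁) (j : q₂) (b : y₂) :
    eqFull U1 U2 F ((i, a), (j, b))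
      = ∑ k, ∑ n, ((ContinuousLinearMap.adjoint U2).comp U1) (EuclideanSpace.single k 1) j
        * ((ContinuousLinearMap.adjoint U1).comp U2) (EuclideanSpace.single n 1) i
        * F ((k, a), (n, b)) := by
  rw [eqFull, ContinuousLinearMap.comp_apply, ContinuousLinearMap.comp_apply, reindexCLM_apply]
  rw [show (Equiv.prodProdProdComm q₁ q₂ y₁ y₂).symm ((i, a), (j, b)) = ((i, j), (a, b)) from rfl]
  rw [clm_apply_eq_sum]
  rw [Fintype.sum_prod_type]
  have collapse : ∀ p1 : q₁ × q₂,
      (∑ p2 : y₁ × y₂, (reindexCLM (Equiv.prodProdProdComm q₁ y₁ q₂ y₂) F) (p1, p2)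
        * (opTensCLM (eqOpCLM U1 U2) (ContinuousLinearMap.id ℂ (EuclideanSpace ℂ (y₁ × y₂))))
          (EuclideanSpace.single (p1, p2) 1) ((i, j), (a, b)))
      = (reindexCLM (Equiv.prodProdProdComm q₁ y₁ q₂ y₂) F) (p1, (a, b))
        * eqOpCLM U1 U2 (EuclideanSpace.single p1 1) (i, j) := by
    intro p1
    have : ∀ p2 : y₁ × y₂,
        (opTensCLM (eqOpCLM U1 U2) (ContinuousLinearMap.id ℂ (EuclideanSpace ℂ (y₁ × y₂))))
          (EuclideanSpace.single (p1, p2) 1) ((i, j), (a, b))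
        = eqOpCLM U1 U2 (EuclideanSpace.single p1 1) (i, j)
          * (if (a, b) = p2 then 1 else 0) := by
      intro p2
      rw [opTensCLM_single]
      simp [EuclideanSpace.single_apply]
    simp only [this]
    simp [mul_ite, mul_one, mul_zero]
  rw [Finset.sum_congr rfl (fun p1 _ => collapse p1), Fintype.sum_prod_type]
  refine Finset.sum_congr rfl (fun k _ => Finset.sum_congr rfl (fun n _ => ?_))
  rw [eqOpCLM_single]
  rw [show (reindexCLM (Equiv.prodProdProdComm q₁ y₁ q₂ y₂) F) ((k, n), (a, b))
      = F ((k, a), (n, b)) from rfl]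
  ring

end Aux

/-- for a unitary `W : Q2 → Q1`, the product `ψ1 ⊗ ψ2` of unit vectors is
fixed by the swap-with-transfer operator `q1 ⊗ v1 ⊗ q2 ⊗ v2 ↦ (W q2) ⊗ v1 ⊗ (W* q1) ⊗ v2`
iff `ψ1, ψ2` factor as `ψ1Q ⊗ ψ1Y`, `ψ2Q ⊗ ψ2Y` (unit vectors) with `ψ1Q = W ψ2Q`. -/
theorem stmt12 {q₁ v₁ q₂ v₂ : Type*}
    [Fintype q₁] [Fintype v₁] [Fintype q₂] [Fintype v₂]
    [DecidableEq q₁] [DecidableEq q₂] [DecidableEq v₁] [DecidableEq v₂]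
    (W : EuclideanSpace ℂ q₂ →L[ℂ] EuclideanSpace ℂ q₁)
    (hW : W.comp (ContinuousLinearMap.adjoint W) =
      ContinuousLinearMap.id ℂ (EuclideanSpace ℂ q₁))
    (hW' : (ContinuousLinearMap.adjoint W).comp W =
      ContinuousLinearMap.id ℂ (EuclideanSpace ℂ q₂))
    (ψ1 : EuclideanSpace ℂ (q₁ × v₁)) (ψ2 : EuclideanSpace ℂ (q₂ × v₂))
    (hψ1 : ‖ψ1‖ = 1) (hψ2 : ‖ψ2‖ = 1) :
    eqFull (ContinuousLinearMap.id ℂ (EuclideanSpace ℂ q₁)) W (tensVec ψ1 ψ2) =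
        tensVec ψ1 ψ2 ↔
      ∃ (ψ1Q : EuclideanSpace ℂ q₁) (ψ1Y : EuclideanSpace ℂ v₁)
        (ψ2Q : EuclideanSpace ℂ q₂) (ψ2Y : EuclideanSpace ℂ v₂),
        ‖ψ1Q‖ = 1 ∧ ‖ψ1Y‖ = 1 ∧ ‖ψ2Q‖ = 1 ∧ ‖ψ2Y‖ = 1 ∧
        ψ1 = tensVec ψ1Q ψ1Y ∧ ψ2 = tensVec ψ2Q ψ2Y ∧ ψ1Q = W ψ2Q := by
  classical
  set AW := ContinuousLinearMap.adjoint W with hAWdef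
  have hAWW : ∀ x : EuclideanSpace ℂ q₂, AW (W x) = x := by
    intro x
    have := congrArg (fun T : EuclideanSpace ℂ q₂ →L[ℂ] EuclideanSpace ℂ q₂ => T x) hW'
    simpa using this
  have hWiso : ∀ x : EuclideanSpace ℂ q₂, ‖W x‖ = ‖x‖ := by
    intro x
    have h1 : (inner ℂ (AW (W x)) x : ℂ) = inner ℂ (W x) (W x) :=
      ContinuousLinearMap.adjoint_inner_left W x (W x)
    rw [hAWW x] at h1
    rw [inner_self_eq_norm_sq_to_K, inner_self_eq_norm_sq_to_K] at h1
    have h2 : (‖W x‖ : ℝ) ^ 2 = ‖x‖ ^ 2 := by exact_mod_cast h1.symm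
    rw [← Real.sqrt_sq (norm_nonneg (W x)), ← Real.sqrt_sq (norm_nonneg x), h2]
  set col1 : v₁ → EuclideanSpace ℂ q₁ := fun a => WithLp.toLp 2 (fun k => ψ1 (k, a)) with hcol1def
  set col2 : v₂ → EuclideanSpace ℂ q₂ := fun b => WithLp.toLp 2 (fun n => ψ2 (n, b)) with hcol2def
  have expand : ∀ (i : q₁) (a : v₁) (j : q₂) (b : v₂),
      eqFull (ContinuousLinearMap.id ℂ (EuclideanSpace ℂ q₁)) W (tensVec ψ1 ψ2) ((i, a), (j, b))
        = W (col2 b) i * AW (col1 a) j := by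
    intro i a j b
    rw [eqFull_apply, Finset.sum_comm]
    conv_rhs => rw [clm_apply_eq_sum W (col2 b) i, clm_apply_eq_sum AW (col1 a) j,
      Finset.sum_mul_sum]
    refine Finset.sum_congr rfl fun n _ => Finset.sum_congr rfl fun k _ => ?_
    rw [tensVec_apply]
    simp only [ContinuousLinearMap.comp_apply, ContinuousLinearMap.coe_id',
      ContinuousLinearMap.adjoint_id, id_eq, ← hAWdef]
    rw [show col2 b n = ψ2 (n, b) from rfl, show col1 a k = ψ1 (k, a) from rfl]
    ring
  have key : eqFull (ContinuousLinearMap.id ℂ (EuclideanSpace ℂ q₁)) W (tensVec ψ1 ψ2)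
        = tensVec ψ1 ψ2
      ↔ ∀ (i : q₁) (a : v₁) (j : q₂) (b : v₂),
        W (col2 b) i * AW (col1 a) j = ψ1 (i, a) * ψ2 (j, b) := by
    constructor
    · intro h i a j b
      have := eval_eq h ((i, a), (j, b))
      rw [expand i a j b] at this
      exact this
    · intro h
      ext p
      obtain ⟨⟨i, a⟩, ⟨j, b⟩⟩ := p
      rw [expand i a j b]
      exact h i a j b
  rw [key]
  constructor
  · intro hC
    have hψ1ne : ∃ p : q₁ × v₁, ψ1 p ≠ 0 := by
      by_contra hno
      push_neg at hno
      have : ψ1 = 0 := by ext p; exact hno p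
      rw [this, norm_zero] at hψ1
      norm_num at hψ1
    have hψ2ne : ∃ p : q₂ × v₂, ψ2 p ≠ 0 := by
      by_contra hno
      push_neg at hno
      have : ψ2 = 0 := by ext p; exact hno p
      rw [this, norm_zero] at hψ2
      norm_num at hψ2
    obtain ⟨⟨i₀, a₀⟩, h1⟩ := hψ1ne
    obtain ⟨⟨j₀, b₀⟩, h2⟩ := hψ2ne
    have h12 : W (col2 b₀) i₀ * AW (col1 a₀) j₀ ≠ 0 := by
      rw [hC i₀ a₀ j₀ b₀]; exact mul_ne_zero h1 h2
    have hd : W (col2 b₀) i₀ ≠ 0 := left_ne_zero_of_mul h12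
    have hc : AW (col1 a₀) j₀ ≠ 0 := right_ne_zero_of_mul h12
    set x1 : EuclideanSpace ℂ q₁ := W (col2 b₀) with hx1def
    set y1 : EuclideanSpace ℂ v₁ := WithLp.toLp 2 (fun a => AW (col1 a) j₀ / ψ2 (j₀, b₀)) with hy1def
    set x2 : EuclideanSpace ℂ q₂ := AW (col1 a₀) with hx2def
    set y2 : EuclideanSpace ℂ v₂ := WithLp.toLp 2 (fun b => W (col2 b) i₀ / ψ1 (i₀, a₀)) with hy2def
    have e1 : ψ1 = tensVec x1 y1 := by
      ext p
      obtain ⟨i, a⟩ := p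
      rw [tensVec_apply]
      rw [show x1 i = W (col2 b₀) i from rfl, show y1 a = AW (col1 a) j₀ / ψ2 (j₀, b₀) from rfl]
      rw [mul_div_assoc', eq_div_iff h2]
      exact (hC i a j₀ b₀).symm
    have e2 : ψ2 = tensVec x2 y2 := by
      ext p
      obtain ⟨j, b⟩ := p
      rw [tensVec_apply]
      rw [show x2 j = AW (col1 a₀) j from rfl, show y2 b = W (col2 b) i₀ / ψ1 (i₀, a₀) from rfl]
      rw [mul_div_assoc', eq_div_iff h1]
      linear_combination (-1 : ℂ) * hC i₀ a₀ j b
    have hx2ne : x2 ≠ 0 := by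
      intro h0
      apply hc
      rw [h0]
      rfl
    set s : ℂ := (‖x2‖ : ℂ) with hsdef
    have hs : s ≠ 0 := by
      simp [hsdef, norm_eq_zero, hx2ne]
    have hy2b₀ : y2 b₀ ≠ 0 := by
      rw [hy2def]
      exact div_ne_zero hd h1
    have hx1x2 : x1 = y2 b₀ • W x2 := by
      have hcol : col2 b₀ = y2 b₀ • x2 := by
        ext n
        have := eval_eq e2 (n, b₀)
        rw [tensVec_apply] at this
        rw [show col2 b₀ n = ψ2 (n, b₀) from rfl, this, PiLp.smul_apply, smul_eq_mul]
        ring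
      rw [hx1def, hcol, map_smul]
    have hx2norm : ‖x2‖ ≠ 0 := norm_ne_zero_iff.mpr hx2ne
    have h3 : ‖s⁻¹ • x2‖ = 1 := by
      rw [norm_smul, norm_inv, hsdef]
      simp [Complex.norm_real, abs_of_nonneg (norm_nonneg x2), inv_mul_cancel₀ hx2norm]
    have h1Q : ‖W (s⁻¹ • x2)‖ = 1 := by rw [hWiso, h3]
    have eψ2' : ψ2 = tensVec (s⁻¹ • x2) (s • y2) := by
      rw [e2]
      ext p
      obtain ⟨j, b⟩ := p
      rw [tensVec_apply, tensVec_apply]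
      simp only [PiLp.smul_apply, smul_eq_mul]
      field_simp
    have eψ1' : ψ1 = tensVec (W (s⁻¹ • x2)) ((s * y2 b₀) • y1) := by
      rw [e1]
      ext p
      obtain ⟨i, a⟩ := p
      rw [tensVec_apply, tensVec_apply, hx1x2, map_smul]
      simp only [PiLp.smul_apply, smul_eq_mul]
      field_simp
    refine ⟨W (s⁻¹ • x2), (s * y2 b₀) • y1, s⁻¹ • x2, s • y2, h1Q, ?_, h3, ?_, eψ1', eψ2', rfl⟩
    · rw [eψ1', norm_tensVec, h1Q, one_mul] at hψ1
      exact hψ1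
    · rw [eψ2', norm_tensVec, h3, one_mul] at hψ2
      exact hψ2
  · rintro ⟨ψ1Q, ψ1Y, ψ2Q, ψ2Y, n1, n2, n3, n4, e1, e2, eW⟩
    intro i a j b
    have hcol2 : W (col2 b) = ψ2Y b • ψ1Q := by
      have hcol : col2 b = ψ2Y b • ψ2Q := by
        ext n
        have := eval_eq e2 (n, b)
        rw [tensVec_apply] at this
        rw [show col2 b n = ψ2 (n, b) from rfl, this, PiLp.smul_apply, smul_eq_mul]
        ring
      rw [hcol, map_smul, ← eW]
    have hcol1 : AW (col1 a) = ψ1Y a • ψ2Q := by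
      have hcol : col1 a = ψ1Y a • ψ1Q := by
        ext k
        have := eval_eq e1 (k, a)
        rw [tensVec_apply] at this
        rw [show col1 a k = ψ1 (k, a) from rfl, this, PiLp.smul_apply, smul_eq_mul]
        ring
      rw [hcol, map_smul, eW, hAWW]
    rw [hcol2, hcol1]
    have r1 := eval_eq e1 (i, a)
    have r2 := eval_eq e2 (j, b)
    rw [tensVec_apply] at r1
    rw [tensVec_apply] at r2
    simp only [PiLp.smul_apply, smul_eq_mul, r1, r2]
    ring
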